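/- Consider the family of complex Lie algebras (t ∈ ℂ small enough) with (1,0)-form basis φ¹_t,...,φ⁴_t satisfying dφ¹_t = dφ²_t = 0, dφ³_t = -((1-|t₁₁t₂₂|²)/((1-|t₁₁|²)(1-|t₂₂|²)))·φ¹²_t + (t₂₂/(1-|t₂₂|²))·φ^{1 2̄}_t - (t₁₁/(1-|t₁₁|²))·φ^{2 1̄}_t, dφ⁴_t = 0. If t₁₁·t₂₂ ≠ 0, then every closed invariant (2,0)-form Ω satisfies Ω ∧ Ω = 0. -/

import Mathlib

/-
STATEMENT 5: For the family of Lie algebras with (1,0)-forms φ¹_t,…,φ⁴_t satisfying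
dφ¹ = dφ² = dφ⁴ = 0 and
dφ³ = -((1-|t₁₁t₂₂|²)/((1-|t₁₁|²)(1-|t₂₂|²))) φ¹∧φ²
      + (t₂₂/(1-|t₂₂|²)) φ¹∧φ̄² - (t₁₁/(1-|t₁₁|²)) φ²∧φ̄¹,
if t₁₁·t₂₂ ≠ 0 then every closed invariant (2,0)-form Ω satisfies Ω ∧ Ω = 0.

Model: exterior algebra over ℂ on generators gen 0..3 = φ¹..φ⁴, gen 4..7 = φ̄¹..φ̄⁴;
d determined by the structure equations (and their conjugates) and the Leibniz rule.
-/

noncomputable section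

abbrev E := ExteriorAlgebra ℂ (Fin 8 → ℂ)

def gen (i : Fin 8) : E := ExteriorAlgebra.ι ℂ (Pi.single i 1)

def K (t11 t22 : ℂ) : ℂ :=
  (1 - (Complex.normSq (t11 * t22) : ℂ)) /
    ((1 - (Complex.normSq t11 : ℂ)) * (1 - (Complex.normSq t22 : ℂ)))

def cA (t22 : ℂ) : ℂ := t22 / (1 - (Complex.normSq t22 : ℂ))

def cB (t11 : ℂ) : ℂ := t11 / (1 - (Complex.normSq t11 : ℂ))

def dgen (t11 t22 : ℂ) : Fin 8 → E :=
  ![0, 0,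
    (-(K t11 t22)) • (gen 0 * gen 1) + (cA t22) • (gen 0 * gen 5)
      - (cB t11) • (gen 1 * gen 4),
    0, 0, 0,
    (-(K t11 t22)) • (gen 4 * gen 5) + ((starRingEnd ℂ) (cA t22)) • (gen 4 * gen 1)
      - ((starRingEnd ℂ) (cB t11)) • (gen 5 * gen 0),
    0]

def d2 (t11 t22 : ℂ) (i j : Fin 8) : E :=
  dgen t11 t22 i * gen j - gen i * dgen t11 t22 j

/-- generic invariant (2,0)-form Ω = α φ¹² + β φ¹³ + γ φ¹⁴ + τ φ²³ + θ φ²⁴ + ζ φ³⁴. -/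
def Om (a b c d e f : ℂ) : E :=
  a • (gen 0 * gen 1) + b • (gen 0 * gen 2) + c • (gen 0 * gen 3) +
  d • (gen 1 * gen 2) + e • (gen 1 * gen 3) + f • (gen 2 * gen 3)

def dOm (t11 t22 a b c d e f : ℂ) : E :=
  a • d2 t11 t22 0 1 + b • d2 t11 t22 0 2 + c • d2 t11 t22 0 3 +
  d • d2 t11 t22 1 2 + e • d2 t11 t22 1 3 + f • d2 t11 t22 2 3

/-! ### Auxiliary machinery -/

/-- coefficient functional for degree-3 monomials -/
def coeff3 (s : Fin 3 → Fin 8) : E →ₗ[ℂ] ℂ :=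
  ExteriorAlgebra.liftAlternating fun n =>
    match n with
    | 3 => (Matrix.detRowAlternating (n := Fin 3) (R := ℂ)).compLinearMap
        (LinearMap.funLeft ℂ ℂ s)
    | _ => 0

lemma coeff3_mono (s : Fin 3 → Fin 8) (a b c : Fin 8) :
    coeff3 s (gen a * gen b * gen c) =
      Matrix.det (Matrix.of fun i j =>
        (Pi.single ((![a,b,c] : Fin 3 → Fin 8) i) 1 : Fin 8 → ℂ) (s j)) := by
  have h : gen a * gen b * gen c
      = ExteriorAlgebra.ιMulti ℂ 3 ![Pi.single a 1, Pi.single b 1, Pi.single c 1] := by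
    simp [ExteriorAlgebra.ιMulti_apply, gen, List.ofFn_succ, mul_assoc]
  rw [h, coeff3, ExteriorAlgebra.liftAlternating_apply_ιMulti]
  rfl

lemma gen_sq (i : Fin 8) : gen i * gen i = 0 := ExteriorAlgebra.ι_sq_zero _

lemma gen_swap (i j : Fin 8) : gen j * gen i = -(gen i * gen j) := by
  have h := ExteriorAlgebra.ι_add_mul_swap (R := ℂ)
    (Pi.single i 1 : Fin 8 → ℂ) (Pi.single j 1 : Fin 8 → ℂ)
  have h' : gen i * gen j + gen j * gen i = 0 := h
  exact eq_neg_of_add_eq_zero_right h'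

lemma z1 (a b d : Fin 8) : (gen a * gen b) * (gen b * gen d) = 0 := by
  rw [mul_assoc, ← mul_assoc (gen b), gen_sq, zero_mul, mul_zero]

lemma z2 (a b d : Fin 8) : (gen a * gen b) * (gen a * gen d) = 0 := by
  rw [mul_assoc, ← mul_assoc (gen b), gen_swap a b]
  simp [← mul_assoc, gen_sq]

lemma z3 (a b c : Fin 8) : (gen a * gen b) * (gen c * gen b) = 0 := by
  rw [gen_swap b c, mul_neg, z1, neg_zero]

lemma z4 (a b c : Fin 8) : (gen a * gen b) * (gen c * gen a) = 0 := by
  rw [gen_swap a c, mul_neg, z2, neg_zero]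

lemma one_sub_normSq_ne (t : ℂ) (h : ‖t‖ < 1) :
    (1 - (Complex.normSq t : ℂ)) ≠ 0 := by
  have h1 : Complex.normSq t < 1 := by
    have := Complex.sq_norm t
    nlinarith [norm_nonneg t]
  intro hc
  have : (Complex.normSq t : ℂ) = 1 := by linear_combination -hc
  rw [← Complex.ofReal_one, Complex.ofReal_inj] at this
  linarith

set_option maxHeartbeats 2000000 in
set_option maxRecDepth 100000 in
theorem stmt5 (t11 t22 : ℂ)
    (h11 : ‖t11‖ < 1) (h22 : ‖t22‖ < 1)
    (hprod : ‖t11 * t22‖ < 1) (hne : t11 * t22 ≠ 0) :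
    ∀ α β γ τ θ ζ : ℂ, dOm t11 t22 α β γ τ θ ζ = 0 →
      Om α β γ τ θ ζ * Om α β γ τ θ ζ = 0 := by
  intro α β γ τ θ ζ h
  have hB : cB t11 ≠ 0 := div_ne_zero (fun h0 => hne (by rw [h0, zero_mul]))
    (one_sub_normSq_ne t11 h11)
  have hA : cA t22 ≠ 0 := div_ne_zero (fun h0 => hne (by rw [h0, mul_zero]))
    (one_sub_normSq_ne t22 h22)
  have hK : K t11 t22 ≠ 0 := div_ne_zero (one_sub_normSq_ne _ hprod)
    (mul_ne_zero (one_sub_normSq_ne t11 h11) (one_sub_normSq_ne t22 h22))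
  have key : ∀ s : Fin 3 → Fin 8, coeff3 s (dOm t11 t22 α β γ τ θ ζ) = 0 := by
    intro s; rw [h, map_zero]
  have hβ : β = 0 := by
    have hd := key ![0,1,4]
    simp only [dOm, d2, dgen, Matrix.cons_val_zero, Matrix.cons_val_one, Matrix.head_cons,
      Matrix.cons_val_two, Matrix.tail_cons, Matrix.cons_val_three, Matrix.cons_val_fin_one,
      zero_mul, mul_zero, sub_zero, zero_sub, mul_add, mul_sub, add_mul, sub_mul,
      smul_mul_assoc, mul_smul_comm, ← mul_assoc,
      map_add, map_sub, map_neg, map_smul, map_zero, coeff3_mono, smul_eq_mul] at hd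
    norm_num (config := { decide := true }) [Matrix.det_fin_three, Pi.single_apply, Fin.val_zero, Fin.val_one,
      show ((2:Fin 8):ℕ)=2 from rfl, show ((3:Fin 8):ℕ)=3 from rfl,
      show ((4:Fin 8):ℕ)=4 from rfl, show ((5:Fin 8):ℕ)=5 from rfl,
      show ((6:Fin 8):ℕ)=6 from rfl, show ((7:Fin 8):ℕ)=7 from rfl] at hd
    tauto
  have hτ : τ = 0 := by
    have hd := key ![0,1,5]
    simp only [dOm, d2, dgen, Matrix.cons_val_zero, Matrix.cons_val_one, Matrix.head_cons,
      Matrix.cons_val_two, Matrix.tail_cons, Matrix.cons_val_three, Matrix.cons_val_fin_one,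
      zero_mul, mul_zero, sub_zero, zero_sub, mul_add, mul_sub, add_mul, sub_mul,
      smul_mul_assoc, mul_smul_comm, ← mul_assoc,
      map_add, map_sub, map_neg, map_smul, map_zero, coeff3_mono, smul_eq_mul] at hd
    norm_num (config := { decide := true }) [Matrix.det_fin_three, Pi.single_apply, Fin.val_zero, Fin.val_one,
      show ((2:Fin 8):ℕ)=2 from rfl, show ((3:Fin 8):ℕ)=3 from rfl,
      show ((4:Fin 8):ℕ)=4 from rfl, show ((5:Fin 8):ℕ)=5 from rfl,
      show ((6:Fin 8):ℕ)=6 from rfl, show ((7:Fin 8):ℕ)=7 from rfl] at hd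
    tauto
  have hζ : ζ = 0 := by
    have hd := key ![0,1,3]
    simp only [dOm, d2, dgen, Matrix.cons_val_zero, Matrix.cons_val_one, Matrix.head_cons,
      Matrix.cons_val_two, Matrix.tail_cons, Matrix.cons_val_three, Matrix.cons_val_fin_one,
      zero_mul, mul_zero, sub_zero, zero_sub, mul_add, mul_sub, add_mul, sub_mul,
      smul_mul_assoc, mul_smul_comm, ← mul_assoc,
      map_add, map_sub, map_neg, map_smul, map_zero, coeff3_mono, smul_eq_mul] at hd
    norm_num (config := { decide := true }) [Matrix.det_fin_three, Pi.single_apply, Fin.val_zero, Fin.val_one,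
      show ((2:Fin 8):ℕ)=2 from rfl, show ((3:Fin 8):ℕ)=3 from rfl,
      show ((4:Fin 8):ℕ)=4 from rfl, show ((5:Fin 8):ℕ)=5 from rfl,
      show ((6:Fin 8):ℕ)=6 from rfl, show ((7:Fin 8):ℕ)=7 from rfl] at hd
    tauto
  subst hβ hτ hζ
  simp [Om, mul_add, add_mul, smul_mul_assoc, mul_smul_comm, z1, z2, z3, z4]

end
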